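/- A square-free polynomial f ∈ ℚ[x], nonnegative on ℝ, is a sum of two squares of polynomials in ℚ[x] if and only if the leading coefficient of f is a sum of two squares of rational numbers and −1 is a square in the quotient ring ℚ[x]/(p) for every monic irreducible factor p of f. -/

import Mathlib

open Polynomial
noncomputable section

lemma irr_Xsq : Irreducible (X ^ 2 + 1 : ℚ[X]) := by
  have h : (X ^ 2 + 1 : ℚ[X]) = X ^ 2 - C (-1) := by simp [map_neg]
  rw [h]
  exact X_pow_sub_C_irreducible_of_prime Nat.prime_two (by
    intro b hb; nlinarith [sq_nonneg b])

abbrev K : Type := AdjoinRoot (X ^ 2 + 1 : ℚ[X])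

instance : Fact (Irreducible (X ^ 2 + 1 : ℚ[X])) := ⟨irr_Xsq⟩
noncomputable abbrev ii : K := AdjoinRoot.root _

lemma ii_sq : ii ^ 2 = -1 := by
  have h := AdjoinRoot.eval₂_root (X ^ 2 + 1 : ℚ[X])
  simp at h
  linear_combination h

def conjHom : K →ₐ[ℚ] K := AdjoinRoot.liftAlgHom _ (Algebra.ofId ℚ K) (-ii) (by simp [ii_sq])

lemma conj_ii : conjHom ii = -ii := AdjoinRoot.liftAlgHom_root ..

lemma conj_conj (z : K) : conjHom (conjHom z) = z := by
  have : conjHom.comp conjHom = AlgHom.id ℚ K := by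
    apply AdjoinRoot.algHom_ext
    show conjHom (conjHom ii) = ii; rw [conj_ii, map_neg, conj_ii, neg_neg]
  exact congrFun (congrArg DFunLike.coe this) z

lemma K_decomp (z : K) : ∃ c d : ℚ, z = algebraMap ℚ K c + algebraMap ℚ K d * ii := by
  obtain ⟨g, rfl⟩ := AdjoinRoot.mk_surjective z
  have hm : (X ^ 2 + 1 : ℚ[X]).Monic := by monicity!
  have hdvd : (X ^ 2 + 1 : ℚ[X]) ∣ g - g %ₘ (X ^ 2 + 1) := by
    nth_rewrite 1 [← modByMonic_add_div g (X ^ 2 + 1)]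
    simp [mul_comm]
  have h1 : AdjoinRoot.mk (X ^ 2 + 1 : ℚ[X]) g
      = AdjoinRoot.mk (X ^ 2 + 1 : ℚ[X]) (g %ₘ (X ^ 2 + 1)) := by
    rw [← sub_eq_zero, ← map_sub, AdjoinRoot.mk_eq_zero]
    exact hdvd
  have hdeg : (g %ₘ (X ^ 2 + 1)).degree ≤ 1 := by
    have h2 := degree_modByMonic_lt g hm
    rw [show (X ^ 2 + 1 : ℚ[X]).degree = 2 from ?_] at h2
    · exact Order.le_of_lt_succ (by exact_mod_cast h2)
    · compute_degree!
  refine ⟨(g %ₘ (X ^ 2 + 1)).coeff 0, (g %ₘ (X ^ 2 + 1)).coeff 1, ?_⟩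
  rw [h1]
  conv_lhs => rw [eq_X_add_C_of_degree_le_one hdeg]
  rw [map_add, map_mul, AdjoinRoot.mk_C, AdjoinRoot.mk_C, AdjoinRoot.mk_X]
  rw [← AdjoinRoot.algebraMap_eq, mul_comm]
  ring_nf
  rfl

lemma conj_fixed {z : K} (h : conjHom z = z) : ∃ c : ℚ, z = algebraMap ℚ K c := by
  obtain ⟨c, d, rfl⟩ := K_decomp z
  have h2 : conjHom (algebraMap ℚ K c + algebraMap ℚ K d * ii)
      = algebraMap ℚ K c - algebraMap ℚ K d * ii := by
    rw [map_add, map_mul, conj_ii, AlgHom.commutes, AlgHom.commutes]; ring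
  rw [h2] at h
  have h3 : (2 : K) * (algebraMap ℚ K d * ii) = 0 := by linear_combination -h
  have hii : (ii : K) ≠ 0 := by
    intro h0
    have := ii_sq
    rw [h0] at this
    simp at this
  rcases mul_eq_zero.1 h3 with h4 | h4
  · norm_num at h4
  rcases mul_eq_zero.1 h4 with h5 | h5
  · refine ⟨c, ?_⟩
    rw [h5]; ring
  · exact absurd h5 hii

abbrev ψ : ℚ →+* K := algebraMap ℚ K
abbrev σc : K →+* K := conjHom.toRingHom

lemma map_psi_conj (A : ℚ[X]) : (A.map ψ).map σc = A.map ψ := by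
  rw [Polynomial.map_map]
  congr 1
  ext q
  simp [AlgHom.commutes]

lemma poly_decomp (Q : K[X]) : ∃ A B : ℚ[X],
    Q = A.map ψ + B.map ψ * C ii := by
  induction Q using Polynomial.induction_on with
  | C c =>
    obtain ⟨a, b, rfl⟩ := K_decomp c
    exact ⟨C a, C b, by simp⟩
  | add p q hp hq =>
    obtain ⟨A1, B1, rfl⟩ := hp
    obtain ⟨A2, B2, rfl⟩ := hq
    exact ⟨A1 + A2, B1 + B2, by push_cast [Polynomial.map_add]; ring⟩
  | monomial n c ih =>
    obtain ⟨A, B, h⟩ := ih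
    refine ⟨A * X, B * X, ?_⟩
    have : (C c : K[X]) * X ^ (n + 1) = (C c * X ^ n) * X := by ring
    rw [this, h]
    simp [Polynomial.map_mul]
    ring

lemma conj_poly_map (A B : ℚ[X]) :
    (A.map ψ + B.map ψ * C ii).map σc = A.map ψ - B.map ψ * C ii := by
  rw [Polynomial.map_add, Polynomial.map_mul, map_psi_conj, map_psi_conj, map_C]
  have : σc ii = -ii := conj_ii
  rw [this, map_neg]
  ring

lemma poly_conj_fixed {Q : K[X]} (h : Q.map σc = Q) :
    ∃ q0 : ℚ[X], Q = q0.map ψ := by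
  obtain ⟨A, B, rfl⟩ := poly_decomp Q
  rw [conj_poly_map] at h
  have h2 : (2 : K[X]) * (B.map ψ * C ii) = 0 := by linear_combination -h
  have hCii : (C ii : K[X]) ≠ 0 := by
    simp only [ne_eq, C_eq_zero]
    intro h0
    have := ii_sq
    rw [h0] at this
    simp at this
  rcases mul_eq_zero.1 h2 with h4 | h4
  · norm_num at h4
  rcases mul_eq_zero.1 h4 with h5 | h5
  · exact ⟨A, by rw [h5]; ring⟩
  · exact absurd h5 hCii

def conjEquiv : K ≃ₐ[ℚ] K :=
  AlgEquiv.ofAlgHom conjHom conjHom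
    (by apply AdjoinRoot.algHom_ext; show conjHom (conjHom ii) = ii; rw [conj_ii, map_neg, conj_ii, neg_neg])
    (by apply AdjoinRoot.algHom_ext; show conjHom (conjHom ii) = ii; rw [conj_ii, map_neg, conj_ii, neg_neg])

lemma irr_conj {Q : K[X]} (h : Irreducible Q) : Irreducible (Q.map σc) := by
  have he : Q.map σc = Polynomial.mapEquiv conjEquiv.toRingEquiv Q := by
    simp [Polynomial.mapEquiv_apply]; rfl
  rw [he]
  exact (MulEquiv.irreducible_iff (Polynomial.mapEquiv conjEquiv.toRingEquiv)).2 h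

lemma key_lemma (p : ℚ[X]) (hm : p.Monic) (hirr : Irreducible p)
    (hu : ∃ u : AdjoinRoot p, u ^ 2 = -1) : ∃ a b : ℚ[X], p = a ^ 2 + b ^ 2 := by
  obtain ⟨u, hu2⟩ := hu
  have hψinj : Function.Injective (ψ : ℚ →+* K) := (algebraMap ℚ K).injective
  have hdegp : 1 ≤ p.natDegree := hirr.natDegree_pos
  -- lift u
  obtain ⟨g, rfl⟩ := AdjoinRoot.mk_surjective u
  set v := g %ₘ p with hv
  have hmkv : AdjoinRoot.mk p v = AdjoinRoot.mk p g := by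
    rw [← sub_eq_zero, ← map_sub, AdjoinRoot.mk_eq_zero, hv]
    nth_rewrite 2 [← modByMonic_add_div g p]
    simp [mul_comm]
  have hpdvd : p ∣ v ^ 2 + 1 := by
    rw [← AdjoinRoot.mk_eq_zero, map_add, map_pow, hmkv, map_one, hu2]
    ring
  have hdegv : v.degree < p.degree := degree_modByMonic_lt g hm
  -- move to K[X]
  set P := p.map ψ with hP
  set V := v.map ψ with hV
  have hPm : P.Monic := hm.map ψ
  have hPdeg : P.degree = p.degree := degree_map_eq_of_injective hψinj p
  have hPdeg1 : 1 ≤ P.natDegree := by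
    rwa [natDegree_map_eq_of_injective hψinj]
  have hP0 : P ≠ 0 := hPm.ne_zero
  have hPnu : ¬ IsUnit P := by
    rw [Polynomial.isUnit_iff_degree_eq_zero]
    intro h0
    rw [degree_eq_natDegree hP0] at h0
    exact_mod_cast absurd h0 (by exact_mod_cast (by omega : ¬ (P.natDegree : ℤ) = 0))
  have hfactdeg : ∀ W : K[X], W ≠ 0 → W.degree < P.degree → P ∣ W → False := by
    intro W hW0 hWdeg hdvd
    exact absurd (degree_le_of_dvd hdvd hW0) (not_le.2 hWdeg)
  -- V ± C ii nonzero of small degree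
  have hne : ∀ s : K, s ≠ 0 → (∀ c : ℚ, s ≠ ψ c) → V + C s ≠ 0 ∧ (V + C s).degree < P.degree := by
    intro s hs0 hsr
    constructor
    · intro h0
      have h1 : V = -C s := by linear_combination h0
      have h2 : V.coeff 0 = -s := by rw [h1]; simp
      have h3 : V.coeff 0 = ψ (v.coeff 0) := by simp [hV]
      have h4 : ψ (v.coeff 0) = -s := by rw [← h3, h2]
      exact hsr (-(v.coeff 0)) (by rw [map_neg, h4, neg_neg])
    · calc (V + C s).degree ≤ max V.degree (C s).degree := degree_add_le _ _
        _ < P.degree := by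
          rw [max_lt_iff]
          constructor
          · rw [hV, hPdeg]
            calc V.degree = v.degree := degree_map_eq_of_injective hψinj v
              _ < p.degree := hdegv
          · calc (C s).degree ≤ 0 := degree_C_le
              _ < P.degree := by
                rw [hPdeg, degree_eq_natDegree hm.ne_zero]
                exact_mod_cast by omega
  have hii_not_rat : ∀ c : ℚ, (ii : K) ≠ ψ c := by
    intro c hc
    have : ψ (c ^ 2 + 1) = 0 := by
      rw [map_add, map_pow, ← hc, ii_sq, map_one]; ring
    have h0 : (c ^ 2 + 1 : ℚ) = 0 := hψinj (by simpa using this)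
    nlinarith
  have hii0 : (ii : K) ≠ 0 := by
    intro h0; have := ii_sq; rw [h0] at this; simp at this
  have hnii_not_rat : ∀ c : ℚ, (-ii : K) ≠ ψ c := by
    intro c hc
    exact hii_not_rat (-c) (by rw [← neg_neg ii, hc, map_neg])
  have hnii0 : (-ii : K) ≠ 0 := neg_ne_zero.2 hii0
  obtain ⟨hne1, hdeg1⟩ := hne ii hii0 hii_not_rat
  obtain ⟨hne2, hdeg2⟩ := hne (-ii) hnii0 hnii_not_rat
  -- P divides the product
  have hProdDvd : P ∣ (V + C ii) * (V + C (-ii)) := by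
    have : (V + C ii) * (V + C (-ii)) = (v ^ 2 + 1).map ψ := by
      rw [Polynomial.map_add, Polynomial.map_pow, Polynomial.map_one, ← hV]
      have hC2 : (C ii : K[X]) ^ 2 = -1 := by rw [← C_pow, ii_sq, map_neg, map_one]
      have hCneg : (C (-ii) : K[X]) = - C ii := by simp
      rw [hCneg]
      linear_combination -hC2
    rw [this]
    exact Polynomial.map_dvd ψ hpdvd
  -- P is not irreducible
  have hPnotirr : ¬ Irreducible P := by
    intro hPirr
    have hPprime : Prime P := hPirr.prime
    rcases hPprime.2.2 _ _ hProdDvd with h | h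
    · exact hfactdeg _ hne1 hdeg1 h
    · exact hfactdeg _ hne2 hdeg2 h
  -- get a monic irreducible factor Q of P with deg Q < deg P
  obtain ⟨Q0, hQ0irr, hQ0dvd⟩ := WfDvdMonoid.exists_irreducible_factor hPnu hP0
  have hQ00 : Q0 ≠ 0 := hQ0irr.ne_zero
  set Q : K[X] := Q0 * C (Q0.leadingCoeff)⁻¹ with hQdef
  have hQm : Q.Monic := monic_mul_leadingCoeff_inv hQ00
  have hassoc : Associated Q0 Q :=
    associated_mul_unit_right Q0 _ (isUnit_C.2 ((inv_ne_zero (leadingCoeff_ne_zero.2 hQ00)).isUnit))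
  have hQirr : Irreducible Q := hassoc.irreducible hQ0irr
  have hQdvd : Q ∣ P := hassoc.dvd_iff_dvd_left.1 hQ0dvd
  obtain ⟨R, hPQR⟩ := hQdvd
  have hQdvd : Q ∣ P := ⟨R, hPQR⟩
  have hR0 : R ≠ 0 := by rintro rfl; simp at hPQR; exact hP0 hPQR
  have hRnu : ¬ IsUnit R := by
    intro hRu
    exact hPnotirr ((hassoc.trans ⟨hRu.unit, by simp [hPQR]⟩).irreducible hQ0irr)
  have hQdegpos : 1 ≤ Q.natDegree := hQirr.natDegree_pos
  have hRdegpos : 1 ≤ R.natDegree := by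
    by_contra h
    push_neg at h
    interval_cases hRn : R.natDegree
    · exact hRnu (Polynomial.isUnit_iff_degree_eq_zero.2 (by rw [degree_eq_natDegree hR0, hRn]; rfl))
  have hQdeglt : Q.natDegree < P.natDegree := by
    have := natDegree_mul hQm.ne_zero hR0
    rw [← hPQR] at this
    omega
  -- conj involution on polynomials
  have hconjconj : ∀ W : K[X], (W.map σc).map σc = W := by
    intro W
    rw [Polynomial.map_map]
    have : (σc : K →+* K).comp σc = RingHom.id K := by
      refine RingHom.ext fun z => ?_; exact conj_conj z
    rw [this, Polynomial.map_id]
  have hσinj : Function.Injective (σc : K →+* K) := σc.injective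
  -- fixed monic divisors of P of positive degree equal P
  have hfix : ∀ S : K[X], S.Monic → S.map σc = S → S ∣ P → 1 ≤ S.natDegree → S = P := by
    intro S hSm hSc hSdvd hSdeg
    obtain ⟨s0, rfl⟩ := poly_conj_fixed hSc
    have hs0m : s0.Monic := hψinj.monic_map_iff.2 hSm
    have hs0dvd : s0 ∣ p := by
      rw [← map_dvd_map ψ hψinj hs0m]
      exact hSdvd
    obtain ⟨t, hpt⟩ := hs0dvd
    rcases hirr.isUnit_or_isUnit hpt with h | h
    · exfalso
      rw [Polynomial.isUnit_iff_degree_eq_zero, degree_eq_natDegree hs0m.ne_zero] at h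
      have : s0.natDegree = 0 := by exact_mod_cast h
      rw [natDegree_map_eq_of_injective hψinj] at hSdeg
      omega
    · rw [Polynomial.isUnit_iff_degree_eq_zero] at h
      have ht0 : t ≠ 0 := by rintro rfl; simp at h
      have hc : t = C (t.coeff 0) := Polynomial.eq_C_of_degree_le_zero (le_of_eq h)
      set c := t.coeff 0
      have hc1 : c = 1 := by
        have := hm.leadingCoeff
        rw [hpt, hc, leadingCoeff_mul, hs0m.leadingCoeff, one_mul, leadingCoeff_C] at this
        exact this
      rw [hP, hpt, hc, hc1, map_one, mul_one]
  -- the conjugate factor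
  set Qb : K[X] := Q.map σc with hQb
  have hQbm : Qb.Monic := hQm.map σc
  have hQbirr : Irreducible Qb := irr_conj hQirr
  have hQbdvd : Qb ∣ P := by
    have h1 : P.map σc = P := by rw [hP]; exact map_psi_conj p
    have h2 : P = Qb * R.map σc := by
      rw [← h1, hPQR, Polynomial.map_mul]
    exact ⟨R.map σc, h2⟩
  have hQbdeg : Qb.natDegree = Q.natDegree := natDegree_map_eq_of_injective hσinj Q
  -- Q ≠ Qb
  have hQne : Q ≠ Qb := by
    intro heq
    have : Q = P := hfix Q hQm heq.symm hQdvd hQdegpos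
    rw [this] at hQdeglt
    omega
  -- Q and Qb coprime
  have hnotdvd : ¬ Q ∣ Qb := by
    intro hdvd
    obtain ⟨t, ht⟩ := hdvd
    rcases hQbirr.isUnit_or_isUnit ht with h | h
    · exact hQirr.not_isUnit h
    · exact hQne (eq_of_monic_of_associated hQm hQbm ⟨h.unit, by rw [ht]; simp⟩)
  have hcop : IsCoprime Q Qb := hQirr.coprime_iff_not_dvd.2 hnotdvd
  have hQQb : Q * Qb ∣ P := hcop.mul_dvd hQdvd hQbdvd
  have hQQbm : (Q * Qb).Monic := hQm.mul hQbm
  have hQQbfix : (Q * Qb).map σc = Q * Qb := by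
    rw [Polynomial.map_mul, ← hQb, hconjconj Q, mul_comm]
  have hQQbdeg : 1 ≤ (Q * Qb).natDegree := by
    rw [natDegree_mul hQm.ne_zero hQbm.ne_zero]
    omega
  have hPeq : Q * Qb = P := hfix _ hQQbm hQQbfix hQQb hQQbdeg
  -- decompose Q
  obtain ⟨A, B, hAB⟩ := poly_decomp Q
  have hQbAB : Qb = A.map ψ - B.map ψ * C ii := by
    rw [hQb, hAB]
    exact conj_poly_map A B
  have hfinal : (A ^ 2 + B ^ 2).map ψ = P := by
    rw [← hPeq, hAB, hQbAB]
    have hC2 : (C ii : K[X]) ^ 2 = -1 := by rw [← C_pow, ii_sq, map_neg, map_one]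
    rw [Polynomial.map_add, Polynomial.map_pow, Polynomial.map_pow]
    linear_combination ((B.map ψ) ^ 2) * hC2
  refine ⟨A, B, ?_⟩
  apply Polynomial.map_injective ψ hψinj
  rw [← hP, hfinal]

lemma brahmagupta {g h : ℚ[X]} (hg : ∃ a b : ℚ[X], g = a ^ 2 + b ^ 2)
    (hh : ∃ a b : ℚ[X], h = a ^ 2 + b ^ 2) : ∃ a b : ℚ[X], g * h = a ^ 2 + b ^ 2 := by
  obtain ⟨a, b, rfl⟩ := hg
  obtain ⟨c, d, rfl⟩ := hh
  exact ⟨a * c - b * d, a * d + b * c, by ring⟩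

lemma coeff_sq_max (a : ℚ[X]) (n : ℕ) (h : a.natDegree ≤ n) :
    (a ^ 2).coeff (n + n) = (a.coeff n) ^ 2 := by
  rcases eq_or_lt_of_le h with heq | hlt
  · rw [sq, sq, ← heq, coeff_mul_degree_add_degree]
    rfl
  · rw [coeff_eq_zero_of_natDegree_lt (by rw [sq]; calc (a*a).natDegree ≤ a.natDegree + a.natDegree := natDegree_mul_le
        _ < n + n := by omega), coeff_eq_zero_of_natDegree_lt hlt]
    ring

theorem squarefree_sum_two_squares_iff (f : Polynomial ℚ) (hsf : Squarefree f)
    (hnn : ∀ x : ℝ, 0 ≤ (f.map (algebraMap ℚ ℝ)).eval x) :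
    (∃ a b : Polynomial ℚ, f = a ^ 2 + b ^ 2) ↔
      ((∃ p q : ℚ, f.leadingCoeff = p ^ 2 + q ^ 2) ∧
        ∀ p : Polynomial ℚ, p.Monic → Irreducible p → p ∣ f →
          ∃ u : AdjoinRoot p, u ^ 2 = -1) := by
  have hf0 : f ≠ 0 := hsf.ne_zero
  constructor
  · rintro ⟨a, b, rfl⟩
    have hab0 : ¬ (a = 0 ∧ b = 0) := by
      rintro ⟨rfl, rfl⟩; simp at hf0
    constructor
    · -- leading coefficient
      set n := max a.natDegree b.natDegree with hn
      have hco : (a ^ 2 + b ^ 2).coeff (n + n) = (a.coeff n) ^ 2 + (b.coeff n) ^ 2 := by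
        rw [coeff_add, coeff_sq_max a n (le_max_left _ _), coeff_sq_max b n (le_max_right _ _)]
      have hcn : a.coeff n ≠ 0 ∨ b.coeff n ≠ 0 := by
        by_contra hc
        push_neg at hc
        obtain ⟨hca, hcb⟩ := hc
        rcases max_cases a.natDegree b.natDegree with ⟨h1, h2⟩ | ⟨h1, h2⟩
        · have ha0 : a = 0 := leadingCoeff_eq_zero.1 (by rwa [leadingCoeff, ← h1, ← hn])
          subst ha0
          simp at hn
          have hb0 : b = 0 := leadingCoeff_eq_zero.1 (by rwa [leadingCoeff, ← hn])
          exact hab0 ⟨rfl, hb0⟩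
        · have hb0 : b = 0 := leadingCoeff_eq_zero.1 (by rwa [leadingCoeff, ← h1, ← hn])
          subst hb0
          simp at hn
          have ha0 : a = 0 := leadingCoeff_eq_zero.1 (by rwa [leadingCoeff, ← hn])
          exact hab0 ⟨ha0, rfl⟩
      have hpos : (a.coeff n) ^ 2 + (b.coeff n) ^ 2 ≠ 0 := by
        rcases hcn with h | h
        · positivity
        · positivity
      have hdeg : (a ^ 2 + b ^ 2).natDegree = n + n := by
        refine le_antisymm ?_ (le_natDegree_of_ne_zero (by rw [hco]; exact hpos))
        calc (a ^ 2 + b ^ 2).natDegree ≤ max (a^2).natDegree (b^2).natDegree :=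
              natDegree_add_le _ _
          _ ≤ n + n := by
            refine max_le ?_ ?_
            · calc (a^2).natDegree ≤ 2 * a.natDegree := natDegree_pow_le
                _ ≤ n + n := by have := le_max_left a.natDegree b.natDegree; omega
            · calc (b^2).natDegree ≤ 2 * b.natDegree := natDegree_pow_le
                _ ≤ n + n := by have := le_max_right a.natDegree b.natDegree; omega
      exact ⟨a.coeff n, b.coeff n, by rw [leadingCoeff, hdeg, hco]⟩
    · intro p hpm hpirr hpdvd
      have : Fact (Irreducible p) := ⟨hpirr⟩
      have h0 : (AdjoinRoot.mk p a) ^ 2 + (AdjoinRoot.mk p b) ^ 2 = 0 := by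
        rw [← map_pow, ← map_pow, ← map_add, AdjoinRoot.mk_eq_zero]
        exact hpdvd
      have hb : AdjoinRoot.mk p b ≠ 0 := by
        intro hb0
        have hpb : p ∣ b := AdjoinRoot.mk_eq_zero.1 hb0
        have ha2 : (AdjoinRoot.mk p a) ^ 2 = 0 := by rw [← h0, hb0]; ring
        have hpa : p ∣ a := AdjoinRoot.mk_eq_zero.1 (pow_eq_zero_iff (n := 2) (by norm_num) |>.1 ha2)
        have : p * p ∣ a ^ 2 + b ^ 2 := by
          obtain ⟨a', rfl⟩ := hpa
          obtain ⟨b', rfl⟩ := hpb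
          exact ⟨a' ^ 2 + b' ^ 2, by ring⟩
        exact hpirr.not_isUnit (hsf p this)
      refine ⟨AdjoinRoot.mk p a / AdjoinRoot.mk p b, ?_⟩
      rw [div_pow]
      rw [div_eq_iff (pow_ne_zero 2 hb)]
      linear_combination h0
  · rintro ⟨⟨pc, qc, hlc⟩, hfac⟩
    classical
    have hprod : ∃ a b : ℚ[X], (UniqueFactorizationMonoid.normalizedFactors f).prod
        = a ^ 2 + b ^ 2 := by
      refine Multiset.prod_induction (fun g => ∃ a b : ℚ[X], g = a ^ 2 + b ^ 2) _
        (fun a b ha hb => brahmagupta ha hb) ⟨1, 0, by ring⟩ ?_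
      intro q hq
      have hqirr : Irreducible q :=
        UniqueFactorizationMonoid.irreducible_of_normalized_factor q hq
      have hqm : q.Monic := by
        have hnorm := UniqueFactorizationMonoid.normalize_normalized_factor q hq
        have := Polynomial.monic_normalize (p := q) hqirr.ne_zero
        rwa [hnorm] at this
      exact key_lemma q hqm hqirr (hfac q hqm hqirr
        (UniqueFactorizationMonoid.dvd_of_mem_normalizedFactors hq))
    have hassoc := UniqueFactorizationMonoid.prod_normalizedFactors hf0
    obtain ⟨u, hu⟩ := hassoc
    have hC : ∃ a b : ℚ[X], (u : ℚ[X]) = a ^ 2 + b ^ 2 := by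
      -- u is C of the leading coefficient of f
      have hMm : ((UniqueFactorizationMonoid.normalizedFactors f).prod).Monic := by
        refine Multiset.prod_induction Polynomial.Monic _ (fun a b ha hb => ha.mul hb)
          monic_one ?_
        intro q hq
        have hnorm := UniqueFactorizationMonoid.normalize_normalized_factor q hq
        have := Polynomial.monic_normalize (p := q)
          (UniqueFactorizationMonoid.irreducible_of_normalized_factor q hq).ne_zero
        rwa [hnorm] at this
      obtain ⟨c, hcu, hcC⟩ := Polynomial.isUnit_iff.1 u.isUnit
      have hlcu : c = f.leadingCoeff := by
        rw [← hu, ← hcC, leadingCoeff_mul, hMm.leadingCoeff, one_mul, leadingCoeff_C]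
      refine ⟨C pc, C qc, ?_⟩
      rw [← hcC, hlcu, hlc]
      push_cast [map_add, map_pow]
      ring
    obtain ⟨a, b, hab⟩ := hprod
    obtain ⟨c, d, hcd⟩ := hC
    obtain ⟨x, y, hxy⟩ := brahmagupta ⟨a, b, hab⟩ ⟨c, d, hcd⟩
    exact ⟨x, y, by rw [← hu, hxy]⟩
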